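/- Let n, m, d be positive integers with 1 ≤ d ≤ n ≤ m, and let K be a field admitting a Galois extension L/K of degree m whose Galois group is cyclic. Then there exists a K-linear subspace C of the space of m×n matrices over K with dim_K C = m·(n − d + 1) such that every nonzero matrix in C has rank at least d; that is, an [m×n, m(n−d+1), d]_K MRD code exists. -/

import Mathlib

open Finset Module LinearMap

section Aux

variable {K L : Type*} [Field K] [Field L] [Algebra K L] [FiniteDimensional K L]

/-- Abel-style telescoping summation. -/
lemma MRD.abel_tele {L M : Type*} [Field L] [AddCommGroup M] [Module L M]
    (b : ℕ → L) (t : ℕ → M) (N : ℕ) :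
    ∑ i ∈ range (N+1), b i • t i
      = (∑ i ∈ range (N+1), b i) • t 0
        + ∑ j ∈ range N, (∑ i ∈ Finset.Ico (j+1) (N+1), b i) • (t (j+1) - t j) := by
  induction N with
  | zero => simp
  | succ N ih =>
    rw [Finset.sum_range_succ (fun i => b i • t i) (N+1), ih,
      Finset.sum_range_succ b (N+1),
      Finset.sum_range_succ (fun j => (∑ i ∈ Finset.Ico (j+1) (N+1+1), b i) • (t (j+1) - t j)) N]
    have h1 : ∀ j ∈ range N, (∑ i ∈ Finset.Ico (j+1) (N+1+1), b i) • (t (j+1) - t j)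
        = (∑ i ∈ Finset.Ico (j+1) (N+1), b i) • (t (j+1) - t j) + b (N+1) • (t (j+1) - t j) := by
      intro j hj
      have := Finset.mem_range.mp hj
      rw [Finset.sum_Ico_succ_top (by omega), add_smul]
    rw [sum_congr rfl h1, sum_add_distrib, ← smul_sum, Finset.sum_range_sub (fun i => t i)]
    have h2 : (∑ i ∈ Finset.Ico (N+1) (N+1+1), b i) = b (N+1) := by
      rw [Finset.sum_Ico_succ_top (le_refl _), Finset.Ico_self, sum_empty, zero_add]
    rw [h2, add_smul]
    simp only [smul_sub]
    abel

lemma MRD.ker_comp_le (s h : L →ₗ[K] L) :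
    finrank K (ker (h ∘ₗ s)) ≤ finrank K (ker h) + finrank K (ker s) := by
  rw [ker_comp]
  set p := Submodule.comap s (ker h) with hp
  have hmaps : ∀ x ∈ p, s x ∈ ker h := fun x hx => hx
  let q : p →ₗ[K] ker h := s.restrict hmaps
  have hrank := q.finrank_range_add_finrank_ker
  have h1 : finrank K (LinearMap.range q) ≤ finrank K (ker h) :=
    (LinearMap.range q).finrank_le
  have h2 : finrank K (ker q) ≤ finrank K (ker s) := by
    have hker : ∀ x : ker q, s ((x : p) : L) = 0 := by
      intro x
      have hx : q (x : p) = 0 := x.2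
      have : (q (x : p) : L) = s ((x : p) : L) := rfl
      rw [hx] at this
      exact this.symm
    let ι : ker q →ₗ[K] ker s :=
      LinearMap.codRestrict (ker s) ((p.subtype).comp (ker q).subtype) (fun x => hker x)
    have hinj : Function.Injective ι := by
      intro x y hxy
      have : ((x : p) : L) = ((y : p) : L) := congrArg (Subtype.val : ker s → L) hxy
      exact Subtype.ext (Subtype.ext this)
    exact LinearMap.finrank_le_finrank_of_injective hinj
  omega

/-- The kernel of a nonzero "σ-polynomial" `∑_{i ≤ k} a i • σ^i` has `K`-dimension at
most `k`. -/
lemma MRD.ker_bound (σ : L ≃ₐ[K] L)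
    (h1 : finrank K (ker (σ.toLinearMap - LinearMap.id : L →ₗ[K] L)) ≤ 1) :
    ∀ (k : ℕ) (a : ℕ → L), (∃ i, i ≤ k ∧ a i ≠ 0) →
      finrank K (ker (∑ i ∈ range (k+1), a i • ((σ^i).toLinearMap : L →ₗ[K] L))) ≤ k := by
  intro k
  induction k with
  | zero =>
    rintro a ⟨i, hi, hai⟩
    interval_cases i
    have he : (∑ i ∈ range 1, a i • ((σ^i).toLinearMap : L →ₗ[K] L)) = a 0 • LinearMap.id := by
      simp [Module.End.one_eq_id]
    rw [he]
    have : ker (a 0 • (LinearMap.id : L →ₗ[K] L)) = ⊥ := by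
      apply ker_eq_bot_of_injective
      intro x y hxy
      simpa [hai] using hxy
    simp [this]
  | succ k ih =>
    rintro a ⟨i, hi, hai⟩
    set f : L →ₗ[K] L := ∑ i ∈ range (k+2), a i • ((σ^i).toLinearMap : L →ₗ[K] L) with hf
    by_cases hak : a (k+1) = 0
    · have hik : i ≤ k := by
        rcases Nat.eq_or_lt_of_le hi with h|h
        · exact absurd (h ▸ hai) (fun hne => hne hak)
        · omega
      have he : f = ∑ i ∈ range (k+1), a i • ((σ^i).toLinearMap : L →ₗ[K] L) := by
        rw [hf, Finset.sum_range_succ, hak, zero_smul, add_zero]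
      rw [he]
      exact (ih a ⟨i, hik, hai⟩).trans (Nat.le_succ k)
    · by_cases hker : ker f = ⊥
      · rw [hker]; simp
      · obtain ⟨v, hv, hv0⟩ := Submodule.ne_bot_iff _ |>.mp hker
        set b : ℕ → L := fun i => a i * (σ^i) v with hb
        have hbsum : ∑ i ∈ range (k+2), b i = 0 := by
          have := hv
          rw [LinearMap.mem_ker, hf] at this
          rw [LinearMap.sum_apply] at this
          simpa [hb, smul_eq_mul] using this
        set c : ℕ → L := fun j => ∑ i ∈ Finset.Ico (j+1) (k+2), b i with hc
        set h : L →ₗ[K] L := ∑ j ∈ range (k+1), c j • ((σ^j).toLinearMap : L →ₗ[K] L) with hh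
        set s : L →ₗ[K] L := σ.toLinearMap - LinearMap.id with hs
        set e : L ≃ₗ[K] L := (LinearEquiv.smulOfNeZero L L v hv0).restrictScalars K with he
        have key : f ∘ₗ (e : L →ₗ[K] L) = h ∘ₗ s := by
          apply LinearMap.ext
          intro x
          have lhs : (f ∘ₗ (e : L →ₗ[K] L)) x = ∑ i ∈ range (k+2), b i • (σ^i) x := by
            simp only [LinearMap.comp_apply, hf, LinearMap.sum_apply, LinearMap.smul_apply]
            have hex : (e : L →ₗ[K] L) x = v * x := rfl
            rw [hex]
            refine Finset.sum_congr rfl fun i _ => ?_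
            simp only [hb, smul_eq_mul, AlgEquiv.toLinearMap_apply, map_mul]
            ring
          have rhs : (h ∘ₗ s) x = ∑ j ∈ range (k+1), c j • ((σ^(j+1)) x - (σ^j) x) := by
            simp only [LinearMap.comp_apply, hh, hs, LinearMap.sum_apply, LinearMap.smul_apply,
              LinearMap.sub_apply, LinearMap.id_apply, AlgEquiv.toLinearMap_apply]
            refine Finset.sum_congr rfl fun j _ => ?_
            rw [map_sub, pow_succ, AlgEquiv.mul_apply]
          rw [lhs, rhs]
          have := MRD.abel_tele b (fun i => (σ^i) x) (k+1)
          simp only [hbsum, zero_smul, zero_add] at this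
          rw [this]
        have hkerf : finrank K (ker f) = finrank K (ker (h ∘ₗ s)) := by
          rw [← key, LinearMap.ker_comp]
          rw [Submodule.comap_equiv_eq_map_symm]
          exact (LinearEquiv.finrank_map_eq _ _).symm
        have hch : ∃ j, j ≤ k ∧ c j ≠ 0 := by
          refine ⟨k, le_refl k, ?_⟩
          have : c k = b (k+1) := by
            rw [hc]
            show (∑ i ∈ Finset.Ico (k+1) (k+2), b i) = b (k+1)
            rw [Finset.sum_Ico_succ_top (le_refl _), Finset.Ico_self, Finset.sum_empty, zero_add]
          rw [this, hb]
          exact mul_ne_zero hak (fun h0 => hv0 ((σ^(k+1)).injective (by simpa using h0)))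
        have hih := ih c hch
        have hks : finrank K (ker s) ≤ 1 := h1
        calc finrank K (ker f) = finrank K (ker (h ∘ₗ s)) := hkerf
          _ ≤ finrank K (ker h) + finrank K (ker s) := MRD.ker_comp_le s h
          _ ≤ k + 1 := add_le_add hih hks

/-- The space of fixed points of a generator of the Galois group has dimension at most 1. -/
lemma MRD.fixed_dim [IsGalois K L] (σ : L ≃ₐ[K] L)
    (hgen : ∀ τ : L ≃ₐ[K] L, τ ∈ Subgroup.zpowers σ) :
    finrank K (ker (σ.toLinearMap - LinearMap.id : L →ₗ[K] L)) ≤ 1 := by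
  have htop : IntermediateField.fixedField (⊤ : Subgroup (L ≃ₐ[K] L)) = ⊥ :=
    ((IsGalois.tfae (F := K) (E := L)).out 0 1).mp (inferInstance : IsGalois K L)
  have hker : ∀ x ∈ ker (σ.toLinearMap - LinearMap.id : L →ₗ[K] L), ∃ c : K, x = c • (1 : L) := by
    intro x hx
    rw [LinearMap.mem_ker, LinearMap.sub_apply, LinearMap.id_apply, sub_eq_zero,
      AlgEquiv.toLinearMap_apply] at hx
    have hstab : σ ∈ MulAction.stabilizer (L ≃ₐ[K] L) x := by
      simpa [AlgEquiv.smul_def] using hx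
    have hall : ∀ τ : L ≃ₐ[K] L, τ • x = x := by
      intro τ
      have : Subgroup.zpowers σ ≤ MulAction.stabilizer (L ≃ₐ[K] L) x :=
        Subgroup.zpowers_le.mpr hstab
      exact this (hgen τ)
    have hmem : x ∈ IntermediateField.fixedField (⊤ : Subgroup (L ≃ₐ[K] L)) := by
      intro g
      exact hall g.1
    rw [htop, IntermediateField.mem_bot] at hmem
    obtain ⟨c, hc⟩ := hmem
    exact ⟨c, by rw [← hc, Algebra.smul_def, mul_one]⟩
  calc finrank K (ker (σ.toLinearMap - LinearMap.id : L →ₗ[K] L))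
      ≤ finrank K (K ∙ (1 : L)) := by
        apply Submodule.finrank_mono
        intro x hx
        obtain ⟨c, hc⟩ := hker x hx
        rw [hc]
        exact Submodule.smul_mem _ _ (Submodule.mem_span_singleton_self 1)
    _ ≤ 1 := le_of_eq (finrank_span_singleton one_ne_zero)

end Aux

/-- if `K` admits a cyclic Galois extension of degree `m`, then
for all `1 ≤ d ≤ n ≤ m` there exists an `[m×n, m(n-d+1), d]_K` MRD code. -/
theorem existence_MRD (K L : Type*) [Field K] [Field L] [Algebra K L]
    [FiniteDimensional K L] [IsGalois K L] (hcyc : IsCyclic (L ≃ₐ[K] L))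
    (m n d : ℕ) (hm : Module.finrank K L = m)
    (hd : 1 ≤ d) (hdn : d ≤ n) (hnm : n ≤ m) :
    ∃ C : Submodule K (Matrix (Fin m) (Fin n) K),
      Module.finrank K C = m * (n - d + 1) ∧
        ∀ A ∈ C, A ≠ 0 → d ≤ A.rank := by
  classical
  obtain ⟨σ, hσ⟩ := hcyc.exists_generator
  have h1 := MRD.fixed_dim (K := K) σ hσ
  set k := n - d with hk
  let β : Basis (Fin m) K L := Module.finBasisOfFinrankEq K L hm
  let g : Fin n → L := fun j => β (Fin.castLE hnm j)
  have hgli : LinearIndependent K g :=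
    β.linearIndependent.comp _ (Fin.castLE_injective hnm)
  -- extend coefficient vectors by zero
  let ext : (Fin (k+1) → L) → (ℕ → L) := fun a i => if h : i < k+1 then a ⟨i, h⟩ else 0
  let T : (Fin (k+1) → L) → (L →ₗ[K] L) :=
    fun a => ∑ i ∈ Finset.range (k+1), ext a i • ((σ^i).toLinearMap : L →ₗ[K] L)
  have hext_ne : ∀ a : Fin (k+1) → L, a ≠ 0 → ∃ i, i ≤ k ∧ ext a i ≠ 0 := by
    intro a ha
    obtain ⟨i0, hi0⟩ := Function.ne_iff.mp ha
    refine ⟨i0.1, Nat.lt_succ_iff.mp i0.isLt, ?_⟩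
    simpa [ext, i0.isLt, Fin.eta, Nat.lt_succ_iff.mp i0.isLt] using hi0
  have hTker : ∀ a : Fin (k+1) → L, a ≠ 0 → finrank K (ker (T a)) ≤ k := by
    intro a ha
    exact MRD.ker_bound σ h1 k (ext a) (hext_ne a ha)
  -- the code as the range of a linear map
  let Ψ : (Fin (k+1) → L) →ₗ[K] Matrix (Fin m) (Fin n) K :=
    { toFun := fun a => Matrix.of fun i j => β.repr (T a (g j)) i
      map_add' := by
        intro a b
        funext i j
        have hT : T (a + b) = T a + T b := by
          simp only [T]
          rw [← Finset.sum_add_distrib]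
          refine Finset.sum_congr rfl fun i _ => ?_
          have : ext (a + b) i = ext a i + ext b i := by
            by_cases h : i ≤ k <;> simp [ext, h]
          rw [this, add_smul]
        simp [hT]
      map_smul' := by
        intro c a
        funext i j
        have hT : T (c • a) = c • T a := by
          simp only [T]
          rw [Finset.smul_sum]
          refine Finset.sum_congr rfl fun i _ => ?_
          have : ext (c • a) i = c • ext a i := by
            by_cases h : i ≤ k <;> simp [ext, h]
          rw [this, smul_assoc]
        simp [hT] }
  have hΨ_apply : ∀ (a : Fin (k+1) → L) (i : Fin m) (j : Fin n),
      Ψ a i j = β.repr (T a (g j)) i := fun a i j => rfl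
  have hΨinj : Function.Injective Ψ := by
    rw [← LinearMap.ker_eq_bot]
    rw [Submodule.eq_bot_iff]
    intro a ha
    by_contra hne
    have hker : ∀ j, g j ∈ ker (T a) := by
      intro j
      have hrep : β.repr (T a (g j)) = 0 := by
        ext i
        have := congrArg (fun M => M i j) (LinearMap.mem_ker.mp ha)
        simpa [hΨ_apply] using this
      have := β.repr.injective (by rw [hrep, map_zero] : β.repr (T a (g j)) = β.repr 0)
      exact LinearMap.mem_ker.mpr this
    let v : Fin n → ker (T a) := fun j => ⟨g j, hker j⟩
    have hvli : LinearIndependent K v :=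
      LinearIndependent.of_comp (ker (T a)).subtype (by exact hgli)
    have hle : n ≤ finrank K (ker (T a)) := by
      simpa using hvli.fintype_card_le_finrank
    have := hTker a hne
    omega
  refine ⟨LinearMap.range Ψ, ?_, ?_⟩
  · rw [LinearMap.finrank_range_of_inj hΨinj]
    rw [Module.finrank_pi_fintype]
    simp [hm, Finset.sum_const, hk]
    ring
  · rintro A ⟨a, rfl⟩ hA0
    have ha : a ≠ 0 := by
      rintro rfl
      exact hA0 (map_zero Ψ)
    -- the associated linear map
    let G : (Fin n → K) →ₗ[K] L := Fintype.linearCombination K g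
    have hGinj : Function.Injective G := by
      rw [← LinearMap.ker_eq_bot, Submodule.eq_bot_iff]
      intro x hx
      have := Fintype.linearIndependent_iff.mp hgli x
        (by simpa [G, Fintype.linearCombination_apply] using hx)
      funext j; exact this j
    have hAm : (Ψ a).mulVecLin = (β.equivFun.toLinearMap) ∘ₗ ((T a) ∘ₗ G) := by
      apply LinearMap.ext
      intro x
      funext i
      have hGx : G x = ∑ j, x j • g j := Fintype.linearCombination_apply K g x
      simp only [LinearMap.comp_apply, Matrix.mulVecLin_apply, Matrix.mulVec, dotProduct]
      rw [hGx, map_sum]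
      simp only [map_smul, LinearEquiv.coe_toLinearMap, Basis.equivFun_apply, map_sum]
      simp only [Finset.sum_apply, Pi.smul_apply, smul_eq_mul, hΨ_apply]
      exact Finset.sum_congr rfl fun j _ => mul_comm _ _
    show d ≤ finrank K (LinearMap.range (Ψ a).mulVecLin)
    rw [hAm]
    rw [LinearMap.range_comp]
    rw [LinearEquiv.finrank_map_eq β.equivFun (LinearMap.range ((T a) ∘ₗ G))]
    have hrn := ((T a) ∘ₗ G).finrank_range_add_finrank_ker
    rw [Module.finrank_pi K] at hrn
    rw [Fintype.card_fin] at hrn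
    have hkerle : finrank K (ker ((T a) ∘ₗ G)) ≤ k := by
      rw [LinearMap.ker_comp]
      have e2 := Submodule.equivMapOfInjective G hGinj (Submodule.comap G (ker (T a)))
      rw [e2.finrank_eq]
      exact le_trans (Submodule.finrank_mono (Submodule.map_comap_le G (ker (T a)))) (hTker a ha)
    omega
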